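/- With up^[n] defined by up^[1] = ↑ and up^[n] = {up^[n-1] | *}, for every n ≥ 1 the game up^[n] + * equals the game {0, G | 0, G} where G = {0, up^[n] + * | 0, up^[n] + *}. -/

import Mathlib

universe u

namespace SetTheory

/-- Conway pre-games (removed from Mathlib; reintroduced with the old definition). -/
inductive PGame : Type (u + 1)
  | mk : ∀ α β : Type u, (α → PGame) → (β → PGame) → PGame

namespace PGame

/-- Pre-game from lists of Left and Right options. -/
def ofLists (L R : List PGame.{u}) : PGame.{u} :=
  mk (ULift (Fin L.length)) (ULift (Fin R.length)) (fun i => L[i.down.1]) fun j => R[j.down.1]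

instance : Zero PGame.{u} :=
  ⟨mk PEmpty PEmpty PEmpty.elim PEmpty.elim⟩

/-- Disjunctive sum of pre-games. -/
noncomputable def add (x y : PGame.{u}) : PGame.{u} :=
  PGame.rec (motive := fun _ => PGame.{u} → PGame.{u})
    (fun xl xr _ _ IHxl IHxr y =>
      PGame.rec (motive := fun _ => PGame.{u})
        (fun yl yr yL yR IHyl IHyr =>
          mk (xl ⊕ yl) (xr ⊕ yr) (Sum.elim (fun i => IHxl i (mk yl yr yL yR)) IHyl)
            (Sum.elim (fun i => IHxr i (mk yl yr yL yR)) IHyr)) y) x y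

noncomputable instance : Add PGame.{u} := ⟨add⟩

/-- Simultaneous definition of `≤` (first component) and `⧏` (second component). -/
noncomputable def leLf (x : PGame.{u}) : PGame.{u} → Prop × Prop :=
  PGame.rec (motive := fun _ => PGame.{u} → Prop × Prop)
    (fun _ _ _ _ IHxl IHxr y =>
      PGame.rec (motive := fun _ => Prop × Prop)
        (fun yl yr yL yR IHyl IHyr =>
          ((∀ i, (IHxl i (mk yl yr yL yR)).2) ∧ (∀ j, (IHyr j).2),
           (∃ i, (IHyl i).1) ∨ (∃ j, (IHxr j (mk yl yr yL yR)).1))) y) x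

instance : LE PGame.{u} := ⟨fun x y => (leLf x y).1⟩

/-- Game equivalence: `x ≤ y ∧ y ≤ x`. -/
def Equiv (x y : PGame.{u}) : Prop := x ≤ y ∧ y ≤ x

instance : HasEquiv PGame.{u} := ⟨Equiv⟩

end PGame

end SetTheory

open SetTheory PGame

/-- star = {0|0} -/
noncomputable def star' : PGame := PGame.ofLists [0] [0]
/-- up = {0|*} -/
noncomputable def up' : PGame := PGame.ofLists [0] [star']
/-- down = {*|0} -/
noncomputable def down' : PGame := PGame.ofLists [star'] [0]

/-- sum of n copies of up -/
noncomputable def nUp : ℕ → PGame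
  | 0 => 0
  | n + 1 => nUp n + up'

/-- sum of n copies of down -/
noncomputable def nDown : ℕ → PGame
  | 0 => 0
  | n + 1 => nDown n + down'

/-- iterated up: up^[1] = ↑, up^[n] = {up^[n-1] | *} -/
noncomputable def upIter : ℕ → PGame
  | 0 => 0
  | 1 => up'
  | n + 2 => PGame.ofLists [upIter (n + 1)] [star']

/-- iterated down: down_[1] = ↓, down_[n] = {* | down_[n-1]} -/
noncomputable def downIter : ℕ → PGame
  | 0 => 0
  | 1 => down'
  | n + 2 => PGame.ofLists [star'] [downIter (n + 1)]

namespace SetTheory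

namespace PGame

def LeftMoves : PGame.{u} → Type u
  | mk l _ _ _ => l

def RightMoves : PGame.{u} → Type u
  | mk _ r _ _ => r

def moveLeft : ∀ g : PGame.{u}, LeftMoves g → PGame.{u}
  | mk _ _ L _ => L

def moveRight : ∀ g : PGame.{u}, RightMoves g → PGame.{u}
  | mk _ _ _ R => R

def LF (x y : PGame.{u}) : Prop := (leLf x y).2

infixl:50 " ⧏ " => LF

theorem le_iff_forall_lf {x y : PGame.{u}} :
    x ≤ y ↔ (∀ i, x.moveLeft i ⧏ y) ∧ ∀ j, x ⧏ y.moveRight j := by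
  cases x; cases y; exact Iff.rfl

theorem lf_iff_exists_le {x y : PGame.{u}} :
    x ⧏ y ↔ (∃ i, x ≤ y.moveLeft i) ∨ ∃ j, x.moveRight j ≤ y := by
  cases x; cases y; exact Iff.rfl

theorem le_of_forall_lf {x y : PGame.{u}} (h₁ : ∀ i, x.moveLeft i ⧏ y)
    (h₂ : ∀ j, x ⧏ y.moveRight j) : x ≤ y :=
  le_iff_forall_lf.2 ⟨h₁, h₂⟩

theorem lf_of_le_moveLeft {x y : PGame.{u}} {i : y.LeftMoves} (h : x ≤ y.moveLeft i) : x ⧏ y :=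
  lf_iff_exists_le.2 (Or.inl ⟨i, h⟩)

theorem lf_of_moveRight_le {x y : PGame.{u}} {j : x.RightMoves} (h : x.moveRight j ≤ y) : x ⧏ y :=
  lf_iff_exists_le.2 (Or.inr ⟨j, h⟩)

theorem pg_le_refl (x : PGame.{u}) : x ≤ x := by
  induction x with
  | mk xl xr xL xR ihl ihr =>
  exact le_of_forall_lf (fun i => lf_of_le_moveLeft (y := mk xl xr xL xR) (i := i) (ihl i))
    (fun j => lf_of_moveRight_le (x := mk xl xr xL xR) (j := j) (ihr j))

theorem le_trans_aux (x y z : PGame.{u}) :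
    (x ≤ y → y ≤ z → x ≤ z) ∧ (x ≤ y → y ⧏ z → x ⧏ z) ∧ (x ⧏ y → y ≤ z → x ⧏ z) := by
  induction x generalizing y z with
  | mk xl xr xL xR ihxl ihxr =>
  induction y generalizing z with
  | mk yl yr yL yR ihyl ihyr =>
  induction z with
  | mk zl zr zL zR ihzl ihzr =>
  refine ⟨fun h1 h2 => ?_, fun h1 h2 => ?_, fun h1 h2 => ?_⟩
  · refine le_of_forall_lf (fun i => ?_) (fun j => ?_)
    · exact (ihxl i (mk yl yr yL yR) (mk zl zr zL zR)).2.2 ((le_iff_forall_lf.1 h1).1 i) h2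
    · exact (ihzr j).2.1 h1 ((le_iff_forall_lf.1 h2).2 j)
  · rcases lf_iff_exists_le.1 h2 with ⟨i, hi⟩ | ⟨j, hj⟩
    · exact lf_of_le_moveLeft (y := mk zl zr zL zR) (i := i) ((ihzl i).1 h1 hi)
    · exact (ihyr j (mk zl zr zL zR)).2.2 ((le_iff_forall_lf.1 h1).2 j) hj
  · rcases lf_iff_exists_le.1 h1 with ⟨i, hi⟩ | ⟨j, hj⟩
    · exact (ihyl i (mk zl zr zL zR)).2.1 hi ((le_iff_forall_lf.1 h2).1 i)
    · exact lf_of_moveRight_le (x := mk xl xr xL xR) (j := j)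
        ((ihxr j (mk yl yr yL yR) (mk zl zr zL zR)).1 hj h2)

instance : Preorder PGame.{u} where
  toLE := inferInstance
  le_refl := pg_le_refl
  le_trans := fun x y z => (le_trans_aux x y z).1

noncomputable def toLeftMovesAdd {x y : PGame.{u}} :
    x.LeftMoves ⊕ y.LeftMoves ≃ (x + y).LeftMoves := by
  cases x; cases y; exact _root_.Equiv.refl _

noncomputable def toRightMovesAdd {x y : PGame.{u}} :
    x.RightMoves ⊕ y.RightMoves ≃ (x + y).RightMoves := by
  cases x; cases y; exact _root_.Equiv.refl _

theorem add_moveLeft_inl {x : PGame.{u}} (y : PGame.{u}) (i) :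
    (x + y).moveLeft (toLeftMovesAdd (Sum.inl i)) = x.moveLeft i + y := by
  cases x; cases y; rfl

theorem add_moveRight_inl {x : PGame.{u}} (y : PGame.{u}) (i) :
    (x + y).moveRight (toRightMovesAdd (Sum.inl i)) = x.moveRight i + y := by
  cases x; cases y; rfl

theorem add_moveLeft_inr (x : PGame.{u}) {y : PGame.{u}} (i) :
    (x + y).moveLeft (toLeftMovesAdd (Sum.inr i)) = x + y.moveLeft i := by
  cases x; cases y; rfl

theorem add_moveRight_inr (x : PGame.{u}) {y : PGame.{u}} (i) :
    (x + y).moveRight (toRightMovesAdd (Sum.inr i)) = x + y.moveRight i := by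
  cases x; cases y; rfl

@[elab_as_elim]
theorem leftMoves_add_cases {x y : PGame.{u}} (k) {P : (x + y).LeftMoves → Prop}
    (hl : ∀ i, P (toLeftMovesAdd (Sum.inl i))) (hr : ∀ i, P (toLeftMovesAdd (Sum.inr i))) :
    P k := by
  rw [← toLeftMovesAdd.apply_symm_apply k]
  rcases toLeftMovesAdd.symm k with i | i
  · exact hl i
  · exact hr i

@[elab_as_elim]
theorem rightMoves_add_cases {x y : PGame.{u}} (k) {P : (x + y).RightMoves → Prop}
    (hl : ∀ j, P (toRightMovesAdd (Sum.inl j))) (hr : ∀ j, P (toRightMovesAdd (Sum.inr j))) :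
    P k := by
  rw [← toRightMovesAdd.apply_symm_apply k]
  rcases toRightMovesAdd.symm k with j | j
  · exact hl j
  · exact hr j

theorem add_zero_equiv (x : PGame.{u}) : x + 0 ≈ x := by
  induction x with
  | mk xl xr xL xR ihl ihr =>
  refine And.intro (le_of_forall_lf ?_ ?_) (le_of_forall_lf ?_ ?_)
  · rintro (i | i)
    · exact lf_of_le_moveLeft (y := mk xl xr xL xR) (i := i) (ihl i).1
    · exact PEmpty.elim i
  · intro j
    exact lf_of_moveRight_le (x := mk xl xr xL xR + 0)
      (j := (Sum.inl j : (mk xl xr xL xR + 0).RightMoves)) (ihr j).1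
  · intro i
    exact lf_of_le_moveLeft (y := mk xl xr xL xR + 0)
      (i := (Sum.inl i : (mk xl xr xL xR + 0).LeftMoves)) (ihl i).2
  · rintro (j | j)
    · exact lf_of_moveRight_le (x := mk xl xr xL xR) (j := j) (ihr j).2
    · exact PEmpty.elim j

theorem zero_add_equiv (x : PGame.{u}) : 0 + x ≈ x := by
  induction x with
  | mk xl xr xL xR ihl ihr =>
  refine And.intro (le_of_forall_lf ?_ ?_) (le_of_forall_lf ?_ ?_)
  · rintro (i | i)
    · exact PEmpty.elim i
    · exact lf_of_le_moveLeft (y := mk xl xr xL xR) (i := i) (ihl i).1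
  · intro j
    exact lf_of_moveRight_le (x := 0 + mk xl xr xL xR)
      (j := (Sum.inr j : (0 + mk xl xr xL xR).RightMoves)) (ihr j).1
  · intro i
    exact lf_of_le_moveLeft (y := 0 + mk xl xr xL xR)
      (i := (Sum.inr i : (0 + mk xl xr xL xR).LeftMoves)) (ihl i).2
  · rintro (j | j)
    · exact PEmpty.elim j
    · exact lf_of_moveRight_le (x := mk xl xr xL xR) (j := j) (ihr j).2

theorem add_right_aux (x y z : PGame.{u}) :
    (x ≤ y → x + z ≤ y + z) ∧ (x ⧏ y → x + z ⧏ y + z) := by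
  induction x generalizing y z with
  | mk xl xr xL xR ihxl ihxr =>
  induction y generalizing z with
  | mk yl yr yL yR ihyl ihyr =>
  induction z with
  | mk zl zr zL zR ihzl ihzr =>
  refine ⟨fun h => le_of_forall_lf ?_ ?_, fun h => ?_⟩
  · rintro (i | k)
    · exact (ihxl i (mk yl yr yL yR) (mk zl zr zL zR)).2 ((le_iff_forall_lf.1 h).1 i)
    · exact lf_of_le_moveLeft (y := mk yl yr yL yR + mk zl zr zL zR)
        (i := (Sum.inr k : (mk yl yr yL yR + mk zl zr zL zR).LeftMoves)) ((ihzl k).1 h)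
  · rintro (j | k)
    · exact (ihyr j (mk zl zr zL zR)).2 ((le_iff_forall_lf.1 h).2 j)
    · exact lf_of_moveRight_le (x := mk xl xr xL xR + mk zl zr zL zR)
        (j := (Sum.inr k : (mk xl xr xL xR + mk zl zr zL zR).RightMoves)) ((ihzr k).1 h)
  · rcases lf_iff_exists_le.1 h with ⟨i, hi⟩ | ⟨j, hj⟩
    · exact lf_of_le_moveLeft (y := mk yl yr yL yR + mk zl zr zL zR)
        (i := (Sum.inl i : (mk yl yr yL yR + mk zl zr zL zR).LeftMoves))
        ((ihyl i (mk zl zr zL zR)).1 hi)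
    · exact lf_of_moveRight_le (x := mk xl xr xL xR + mk zl zr zL zR)
        (j := (Sum.inl j : (mk xl xr xL xR + mk zl zr zL zR).RightMoves))
        ((ihxr j (mk yl yr yL yR) (mk zl zr zL zR)).1 hj)

instance : AddRightMono PGame.{u} := ⟨fun z _ _ h => (add_right_aux _ _ z).1 h⟩

end PGame

end SetTheory

-- AUX

lemma upS (n : ℕ) : upIter (n+1) = PGame.ofLists [upIter n] [star'] := by
  cases n <;> rfl

lemma star'_moveLeft (i) : star'.moveLeft i = 0 := by
  obtain ⟨i⟩ := i
  match i with
  | (0 : Fin 1) => rfl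

lemma star'_moveRight (j) : star'.moveRight j = 0 := by
  obtain ⟨j⟩ := j
  match j with
  | (0 : Fin 1) => rfl

lemma upIter_moveLeft (n : ℕ) : ∀ k, (upIter (n+1)).moveLeft k = upIter n := by
  rw [upS n]
  intro k
  obtain ⟨k⟩ := k
  match k with
  | (0 : Fin 1) => rfl

lemma upIter_moveRight (n : ℕ) : ∀ k, (upIter (n+1)).moveRight k = star' := by
  rw [upS n]
  intro k
  obtain ⟨k⟩ := k
  match k with
  | (0 : Fin 1) => rfl

noncomputable def upL (n : ℕ) : (upIter (n+1)).LeftMoves :=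
  cast (congrArg PGame.LeftMoves (upS n)).symm (ULift.up (0 : Fin 1))

noncomputable def upR (n : ℕ) : (upIter (n+1)).RightMoves :=
  cast (congrArg PGame.RightMoves (upS n)).symm (ULift.up (0 : Fin 1))

lemma zero_lf_star' : (0 : PGame) ⧏ star' :=
  lf_of_le_moveLeft (i := (ULift.up (0 : Fin 1) : star'.LeftMoves)) le_rfl

lemma star'_lf_zero : star' ⧏ (0 : PGame) :=
  lf_of_moveRight_le (j := (ULift.up (0 : Fin 1) : star'.RightMoves)) le_rfl

lemma zero_le_upIter : ∀ n, (0 : PGame) ≤ upIter n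
  | 0 => le_rfl
  | n+1 => by
    apply le_of_forall_lf
    · intro i; exact PEmpty.elim i
    · intro j; rw [upIter_moveRight]; exact zero_lf_star'

lemma up_step : ∀ n, upIter n ≤ upIter (n+1)
  | 0 => zero_le_upIter 1
  | n+1 => by
    apply le_of_forall_lf
    · intro i
      rw [upIter_moveLeft]
      exact lf_of_le_moveLeft (i := upL (n+1))
        (by rw [upIter_moveLeft]; exact up_step n)
    · intro j
      rw [upIter_moveRight]
      exact lf_of_moveRight_le (j := upR n) (by rw [upIter_moveRight])

lemma up_mono : Monotone upIter := monotone_nat_of_le_succ up_step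

lemma ss_le_zero : star' + star' ≤ 0 := by
  apply le_of_forall_lf
  · intro i
    induction i using leftMoves_add_cases with
    | hl k => ?_
    | hr k => ?_
    · rw [add_moveLeft_inl, star'_moveLeft]
      exact lf_of_moveRight_le (j := toRightMovesAdd (Sum.inr (ULift.up (0 : Fin 1))))
        (by erw [add_moveRight_inr, star'_moveRight]; exact (zero_add_equiv 0).1)
    · rw [add_moveLeft_inr, star'_moveLeft]
      exact lf_of_moveRight_le (j := toRightMovesAdd (Sum.inl (ULift.up (0 : Fin 1))))
        (by erw [add_moveRight_inl, star'_moveRight]; exact (add_zero_equiv 0).1)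
  · intro j; exact PEmpty.elim j

lemma zero_le_ss : (0 : PGame) ≤ star' + star' := by
  apply le_of_forall_lf
  · intro i; exact PEmpty.elim i
  · intro j
    induction j using rightMoves_add_cases with
    | hl k => ?_
    | hr k => ?_
    · rw [add_moveRight_inl, star'_moveRight]
      exact lf_of_le_moveLeft (i := toLeftMovesAdd (Sum.inr (ULift.up (0 : Fin 1))))
        (by erw [add_moveLeft_inr, star'_moveLeft]; exact (zero_add_equiv 0).2)
    · rw [add_moveRight_inr, star'_moveRight]
      exact lf_of_le_moveLeft (i := toLeftMovesAdd (Sum.inl (ULift.up (0 : Fin 1))))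
        (by erw [add_moveLeft_inl, star'_moveLeft]; exact (add_zero_equiv 0).2)

lemma X_lf_zero : ∀ n, upIter n + star' ⧏ 0
  | 0 => lf_of_moveRight_le (j := toRightMovesAdd (Sum.inr (ULift.up (0 : Fin 1))))
      (by erw [add_moveRight_inr, star'_moveRight]; exact (add_zero_equiv 0).1)
  | n+1 => lf_of_moveRight_le (j := toRightMovesAdd (Sum.inl (upR n)))
      (by rw [add_moveRight_inl, upIter_moveRight]; exact ss_le_zero)

lemma star'_le_add : ∀ n, star' ≤ upIter n + star'
  | 0 => (zero_add_equiv star').2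
  | n+1 => by
    apply le_of_forall_lf
    · intro i
      rw [star'_moveLeft]
      exact lf_of_le_moveLeft (i := toLeftMovesAdd (Sum.inr (ULift.up (0 : Fin 1))))
        (by erw [add_moveLeft_inr, star'_moveLeft]
            exact (zero_le_upIter (n+1)).trans (add_zero_equiv _).2)
    · intro j
      induction j using rightMoves_add_cases with
      | hl k => ?_
      | hr k => ?_
      · rw [add_moveRight_inl, upIter_moveRight]
        exact lf_of_le_moveLeft (i := toLeftMovesAdd (Sum.inr (ULift.up (0 : Fin 1))))
          (by erw [add_moveLeft_inr, star'_moveLeft]; exact (add_zero_equiv star').2)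
      · rw [add_moveRight_inr, star'_moveRight]
        exact lf_of_moveRight_le (j := (ULift.up (0 : Fin 1) : star'.RightMoves))
          (by erw [star'_moveRight]
              exact (zero_le_upIter (n+1)).trans (add_zero_equiv _).2)

/-- The game G from the statement. -/
noncomputable def Gg (n : ℕ) : PGame :=
  PGame.ofLists [0, upIter (n+1) + star'] [0, upIter (n+1) + star']

lemma star'_le_Gg (m : ℕ) : star' ≤ Gg m := by
  apply le_of_forall_lf
  · intro i
    rw [star'_moveLeft]
    exact lf_of_le_moveLeft (i := (ULift.up (0 : Fin 2) : (Gg m).LeftMoves)) le_rfl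
  · intro j
    obtain ⟨j⟩ := j
    match j with
    | (0 : Fin 2) => exact star'_lf_zero
    | (1 : Fin 2) =>
      show star' ⧏ upIter (m+1) + star'
      exact lf_of_le_moveLeft (i := toLeftMovesAdd (Sum.inl (upL m)))
        (by rw [add_moveLeft_inl, upIter_moveLeft]; exact star'_le_add m)

lemma key : ∀ m, upIter m + star' ≤ Gg m
  | 0 => by
    apply le_of_forall_lf
    · intro i
      induction i using leftMoves_add_cases with
      | hl k => ?_
      | hr k => ?_
      · exact PEmpty.elim k
      · rw [add_moveLeft_inr, star'_moveLeft]
        exact lf_of_le_moveLeft (i := (ULift.up (0 : Fin 2) : (Gg 0).LeftMoves))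
          ((add_zero_equiv 0).1)
    · intro j
      obtain ⟨j⟩ := j
      match j with
      | (0 : Fin 2) => exact X_lf_zero 0
      | (1 : Fin 2) =>
        show upIter 0 + star' ⧏ upIter (0+1) + star'
        exact lf_of_le_moveLeft (i := toLeftMovesAdd (Sum.inl (upL 0)))
          (by rw [add_moveLeft_inl, upIter_moveLeft])
  | m'+1 => by
    apply le_of_forall_lf
    · intro i
      induction i using leftMoves_add_cases with
      | hl k => ?_
      | hr k => ?_
      · rw [add_moveLeft_inl, upIter_moveLeft]
        exact lf_of_le_moveLeft (i := (ULift.up (1 : Fin 2) : (Gg (m'+1)).LeftMoves))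
          ((add_le_add_left (up_mono (show m' ≤ m' + 2 by omega)) star' :
            upIter m' + star' ≤ upIter (m'+2) + star'))
      · rw [add_moveLeft_inr, star'_moveLeft]
        exact lf_of_moveRight_le (j := toRightMovesAdd (Sum.inl (upR m')))
          (by rw [add_moveRight_inl, upIter_moveRight]
              exact (add_zero_equiv star').1.trans (star'_le_Gg (m'+1)))
    · intro j
      obtain ⟨j⟩ := j
      match j with
      | (0 : Fin 2) => exact X_lf_zero (m'+1)
      | (1 : Fin 2) =>
        show upIter (m'+1) + star' ⧏ upIter (m'+2) + star'
        exact lf_of_le_moveLeft (i := toLeftMovesAdd (Sum.inl (upL (m'+1))))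
          (by rw [add_moveLeft_inl, upIter_moveLeft])

lemma star'_le_Hh (m : ℕ) : star' ≤ PGame.ofLists [0, Gg m] [0, Gg m] := by
  apply le_of_forall_lf
  · intro i
    rw [star'_moveLeft]
    exact lf_of_le_moveLeft
      (i := (ULift.up (0 : Fin 2) : (PGame.ofLists [0, Gg m] [0, Gg m]).LeftMoves)) le_rfl
  · intro j
    obtain ⟨j⟩ := j
    match j with
    | (0 : Fin 2) => exact star'_lf_zero
    | (1 : Fin 2) =>
      show star' ⧏ Gg m
      exact lf_of_le_moveLeft (i := (ULift.up (1 : Fin 2) : (Gg m).LeftMoves))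
        (star'_le_add (m+1))

lemma HleX (m : ℕ) : PGame.ofLists [0, Gg m] [0, Gg m] ≤ upIter (m+1) + star' := by
  apply le_of_forall_lf
  · intro i
    obtain ⟨i⟩ := i
    match i with
    | (0 : Fin 2) =>
      show (0 : PGame) ⧏ _
      exact lf_of_le_moveLeft (i := toLeftMovesAdd (Sum.inr (ULift.up (0 : Fin 1))))
        (by erw [add_moveLeft_inr, star'_moveLeft]
            exact (zero_le_upIter (m+1)).trans (add_zero_equiv _).2)
    | (1 : Fin 2) =>
      show Gg m ⧏ _
      exact lf_of_moveRight_le (j := (ULift.up (1 : Fin 2) : (Gg m).RightMoves)) le_rfl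
  · intro j
    induction j using rightMoves_add_cases with
    | hl k => ?_
    | hr k => ?_
    · rw [add_moveRight_inl, upIter_moveRight]
      exact lf_of_moveRight_le
        (j := (ULift.up (0 : Fin 2) : (PGame.ofLists [0, Gg m] [0, Gg m]).RightMoves))
        zero_le_ss
    · rw [add_moveRight_inr, star'_moveRight]
      exact lf_of_moveRight_le
        (j := (ULift.up (0 : Fin 2) : (PGame.ofLists [0, Gg m] [0, Gg m]).RightMoves))
        ((zero_le_upIter (m+1)).trans (add_zero_equiv _).2)

lemma XleH (m : ℕ) : upIter (m+1) + star' ≤ PGame.ofLists [0, Gg m] [0, Gg m] := by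
  apply le_of_forall_lf
  · intro i
    induction i using leftMoves_add_cases with
    | hl k => ?_
    | hr k => ?_
    · rw [add_moveLeft_inl, upIter_moveLeft]
      exact lf_of_le_moveLeft
        (i := (ULift.up (1 : Fin 2) : (PGame.ofLists [0, Gg m] [0, Gg m]).LeftMoves))
        (key m)
    · rw [add_moveLeft_inr, star'_moveLeft]
      exact lf_of_moveRight_le (j := toRightMovesAdd (Sum.inl (upR m)))
        (by rw [add_moveRight_inl, upIter_moveRight]
            exact (add_zero_equiv star').1.trans (star'_le_Hh m))
  · intro j
    obtain ⟨j⟩ := j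
    match j with
    | (0 : Fin 2) => exact X_lf_zero (m+1)
    | (1 : Fin 2) =>
      show _ ⧏ Gg m
      exact lf_of_le_moveLeft (i := (ULift.up (1 : Fin 2) : (Gg m).LeftMoves)) le_rfl

theorem stmt9 (n : ℕ) (hn : 1 ≤ n)
    (G : PGame) (hG : G = PGame.ofLists [0, upIter n + star'] [0, upIter n + star']) :
    PGame.ofLists [0, G] [0, G] ≈ upIter n + star' := by
  obtain ⟨m, rfl⟩ : ∃ m, n = m + 1 := ⟨n - 1, by omega⟩
  subst hG
  exact ⟨HleX m, XleH m⟩
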